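/- Let A be a ring and B a commutative ring. Let g : A → B be a central ℤ-linear map, let n ≥ 1, and let a_1, …, a_n ∈ A. For each i ∈ [n−1], define (a_1^{(i)}, …, a_{n-1}^{(i)}) := (a_1, …, a_{i-1}, a_i·a_n, a_{i+1}, …, a_{n-1}). For any subset P = {p_1, …, p_r} of [n] with p_1, …, p_r distinct, set b_P := g_r(a_{p_1}, …, a_{p_r}), and for P ⊆ [n−1] set b_P^{(i)} := g_r(a_{p_1}^{(i)}, …, a_{p_r}^{(i)}). Then every subset P of [n−1] satisfies b_{P ∪ {n}} = b_P · g(a_n) − Σ_{i ∈ P} b_P^{(i)}. -/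

import Mathlib

open scoped Classical

noncomputable section

/-- A `ℤ`-linear map `f : A → B` is *central* if `f (a * a') = f (a' * a)` for all `a, a'`. -/
def Central {A B : Type*} [Ring A] [CommRing B] (f : A →ₗ[ℤ] B) : Prop :=
  ∀ a a' : A, f (a * a') = f (a' * a)

/-- The product `a x * a (σ x) * a (σ² x) * ⋯` along the cycle of the permutation `σ`
containing `x`, starting at `x` (the cycle has length `Function.minimalPeriod σ x`). -/
def cycleProdAt {ι A : Type*} [Ring A] (a : ι → A) (σ : Equiv.Perm ι) (x : ι) : A :=
  ((List.range (Function.minimalPeriod (⇑σ) x)).map (fun j => a ((σ ^ j) x))).prod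

/-- The Frobenius map of a central `ℤ`-linear map `f : A → B`, applied to a finite family
`a : ι → A`:  `∑_{σ} sgn σ • ∏_{cycles c of σ} f (a_{i₁} a_{i₂} ⋯ a_{i_k})`, where each cycle
is represented by the product along it starting from its distinguished element (the one
minimizing a fixed enumeration of `ι`); when `f` is central this agrees with the classical
definition, which is independent of the starting points. -/
def frob {ι A B : Type*} [Fintype ι] [DecidableEq ι] [Ring A] [CommRing B]
    (f : A →ₗ[ℤ] B) (a : ι → A) : B :=
  ∑ σ : Equiv.Perm ι, (Equiv.Perm.sign σ : ℤ) •
    ∏ x : ι,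
      if ∀ j : ℕ, (Fintype.equivFin ι) x ≤ (Fintype.equivFin ι) ((σ ^ j) x)
      then f (cycleProdAt a σ x) else 1

/-- `f` is an `n`-homomorphism if it is central and its `(n+1)`-Frobenius map vanishes. -/
def IsNHom {A B : Type*} [Ring A] [CommRing B] (n : ℕ) (f : A →ₗ[ℤ] B) : Prop :=
  Central f ∧ ∀ a : Fin (n + 1) → A, frob f a = 0

/-- `π` is a set partition of the finite set `J`: its blocks are nonempty, pairwise
disjoint, and their union is `J`. -/
def IsSetPartition {α : Type*} [DecidableEq α] (J : Finset α) (π : Finset (Finset α)) : Prop :=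
  (∀ P ∈ π, P.Nonempty) ∧
  (∀ P ∈ π, ∀ Q ∈ π, P ≠ Q → Disjoint P Q) ∧
  π.biUnion id = J

/-- Delete the element `n` from the block of `π` containing it (removing the block if it
becomes empty). -/
def delPart (n : ℕ) (π : Finset (Finset ℕ)) : Finset (Finset ℕ) :=
  (π.image (fun P => P.erase n)).erase ∅

section Aux

open Equiv Function

variable {ι κ A B : Type*} [Ring A] [CommRing B]

lemma central_rotate (f : A →ₗ[ℤ] B) (hf : Central f) (l : List A) (k : ℕ) :
    f ((l.rotate k).prod) = f (l.prod) := by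
  rcases eq_or_ne l [] with rfl | hl
  · simp
  have hlen : 0 < l.length := List.length_pos_iff.2 hl
  rw [← List.rotate_mod]
  rw [List.rotate_eq_drop_append_take (le_of_lt (Nat.mod_lt _ hlen))]
  rw [List.prod_append, hf, ← List.prod_append, List.take_append_drop]

lemma perm_mem_periodicPts [Finite ι] (σ : Perm ι) (x : ι) :
    x ∈ Function.periodicPts ⇑σ := by
  refine ⟨orderOf σ, orderOf_pos σ, ?_⟩
  simp [Function.IsPeriodicPt, Function.IsFixedPt, pow_orderOf_eq_one]
  rw [Equiv.Perm.iterate_eq_pow, pow_orderOf_eq_one]; rfl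

lemma perm_minimalPeriod_pos [Finite ι] (σ : Perm ι) (x : ι) :
    0 < Function.minimalPeriod ⇑σ x :=
  Function.minimalPeriod_pos_of_mem_periodicPts (perm_mem_periodicPts σ x)

lemma perm_pow_minimalPeriod_apply [Finite ι] (σ : Perm ι) (x : ι) :
    (σ ^ Function.minimalPeriod ⇑σ x) x = x := by
  have := Function.iterate_minimalPeriod (f := ⇑σ) (x := x)
  rwa [Equiv.Perm.iterate_eq_pow] at this

lemma f_cycleProdAt_sameCycle [Finite ι] (f : A →ₗ[ℤ] B) (hf : Central f) (a : ι → A)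
    (σ : Perm ι) {x y : ι} (h : σ.SameCycle x y) :
    f (cycleProdAt a σ x) = f (cycleProdAt a σ y) := by
  obtain ⟨k, -, -, rfl⟩ := h.exists_pow_eq''
  have hper : Function.minimalPeriod ⇑σ ((σ ^ k) x) = Function.minimalPeriod ⇑σ x := by
    have := Function.minimalPeriod_apply_iterate (perm_mem_periodicPts σ x) k
    simpa [Equiv.Perm.iterate_eq_pow] using this
  set m := Function.minimalPeriod ⇑σ x with hm
  have hmpos : 0 < m := perm_minimalPeriod_pos σ x
  have hlist :
      (List.range m).map (fun j => a ((σ ^ j) ((σ ^ k) x)))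
        = ((List.range m).map (fun j => a ((σ ^ j) x))).rotate k := by
    apply List.ext_get
    · simp
    intro i h1 h2
    rw [List.get_rotate]
    simp only [List.get_eq_getElem, List.getElem_map, List.getElem_range]
    congr 1
    have hlen : (((List.range m).map (fun j => a ((σ ^ j) x))).length) = m := by simp
    have : (σ ^ i) ((σ ^ k) x) = (σ ^ ((i + k) % m)) x := by
      rw [← Equiv.Perm.mul_apply, ← pow_add]
      have := Function.iterate_mod_minimalPeriod_eq (f := ⇑σ) (x := x) (n := i + k)
      rw [← hm] at this
      simpa [Equiv.Perm.iterate_eq_pow] using this.symm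
    simp only [hlen]
    rw [this]
  unfold cycleProdAt
  rw [hper, hlist, central_rotate f hf]

lemma cycleProdAt_comp [Finite ι] [Finite κ] (a : ι → A)
    (σ : Perm ι) (τ : Perm κ) (u : κ → ι) (hu : Function.Injective u) (x : κ)
    (hj : ∀ j : ℕ, (σ ^ j) (u x) = u ((τ ^ j) x)) :
    cycleProdAt a σ (u x) = cycleProdAt (fun y => a (u y)) τ x := by
  have hm : Function.minimalPeriod ⇑σ (u x) = Function.minimalPeriod ⇑τ x := by
    apply le_antisymm
    · refine Function.IsPeriodicPt.minimalPeriod_le (perm_minimalPeriod_pos τ x) ?_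
      show Function.IsFixedPt _ _
      simp only [Equiv.Perm.iterate_eq_pow, Function.IsFixedPt]
      rw [hj, perm_pow_minimalPeriod_apply]
    · refine Function.IsPeriodicPt.minimalPeriod_le (perm_minimalPeriod_pos σ (u x)) ?_
      show Function.IsFixedPt _ _
      simp only [Equiv.Perm.iterate_eq_pow, Function.IsFixedPt]
      apply hu
      rw [← hj, perm_pow_minimalPeriod_apply]
  unfold cycleProdAt
  rw [hm]
  congr 1
  apply List.map_congr_left
  intro j _
  rw [hj]

lemma cycleProdAt_congr (a₁ a₂ : ι → A) (τ : Perm ι) (x : ι)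
    (h : ∀ j : ℕ, a₁ ((τ ^ j) x) = a₂ ((τ ^ j) x)) :
    cycleProdAt a₁ τ x = cycleProdAt a₂ τ x := by
  unfold cycleProdAt
  congr 1
  apply List.map_congr_left
  intro j _
  exact h j

end Aux

section Transversal

open Equiv Function

variable {ι κ M A B : Type*}

/-- A transversal of the cycles of `σ`. -/
def IsTransversal (σ : Equiv.Perm ι) (R : Finset ι) : Prop :=
  ∀ x : ι, ∃! y, y ∈ R ∧ σ.SameCycle x y

lemma sameCycle_pow (σ : Perm ι) (x : ι) (j : ℕ) : σ.SameCycle x ((σ ^ j) x) :=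
  ⟨(j : ℤ), by rw [zpow_natCast]⟩

lemma existsUnique_min [Fintype ι] (σ : Perm ι) (ρ : ι → ℕ) (hρ : Function.Injective ρ)
    (x : ι) : ∃! y, σ.SameCycle x y ∧ ∀ j : ℕ, ρ y ≤ ρ ((σ ^ j) y) := by
  classical
  set S : Finset ι := Finset.univ.filter (fun y => σ.SameCycle x y) with hS
  have hxS : x ∈ S := by simp [hS, Equiv.Perm.SameCycle.refl]
  obtain ⟨y, hyS, hmin⟩ := S.exists_min_image ρ ⟨x, hxS⟩
  have hxy : σ.SameCycle x y := by simpa [hS] using hyS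
  refine ⟨y, ⟨hxy, fun j => ?_⟩, ?_⟩
  · exact hmin _ (by simp [hS, hxy.trans (sameCycle_pow σ y j)])
  · rintro z ⟨hxz, hz⟩
    have hzy : σ.SameCycle z y := hxz.symm.trans hxy
    obtain ⟨k, -, -, hk⟩ := hzy.exists_pow_eq''
    obtain ⟨k', -, -, hk'⟩ := hzy.symm.exists_pow_eq''
    refine hρ (le_antisymm ?_ ?_)
    · have := hz k; rwa [hk] at this
    · exact hmin _ (by simp [hS, hxz])

lemma isTransversal_min [Fintype ι] (σ : Perm ι) (ρ : ι → ℕ) (hρ : Function.Injective ρ) :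
    IsTransversal σ (Finset.univ.filter (fun y => ∀ j : ℕ, ρ y ≤ ρ ((σ ^ j) y))) := by
  intro x
  obtain ⟨y, hy, huniq⟩ := existsUnique_min σ ρ hρ x
  refine ⟨y, ⟨by simp [hy.2], hy.1⟩, ?_⟩
  rintro z ⟨hz1, hz2⟩
  exact huniq z ⟨hz2, by simpa using hz1⟩

lemma prod_transversal [Fintype ι] [CommMonoid M] (σ : Perm ι) (ρ : ι → ℕ)
    (hρ : Function.Injective ρ) (F : ι → M) (hF : ∀ x y, σ.SameCycle x y → F x = F y)
    (R : Finset ι) (hR : IsTransversal σ R) :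
    (∏ x : ι, if ∀ j : ℕ, ρ x ≤ ρ ((σ ^ j) x) then F x else 1) = ∏ y ∈ R, F y := by
  classical
  rw [← Finset.prod_filter]
  choose rep hrep using hR
  choose pt hpt using existsUnique_min σ ρ hρ
  refine Finset.prod_bij' (i := fun y _ => rep y) (j := fun z _ => pt z)
    (fun y hy => (hrep y).1.1) (fun z hz => ?_) (fun y hy => ?_) (fun z hz => ?_)
    (fun y hy => hF _ _ (hrep y).1.2) 
  · simp only [Finset.mem_filter, Finset.mem_univ, true_and]
    exact (hpt z).1.2
  · refine ((hpt (rep y)).2 y ⟨(hrep y).1.2.symm, ?_⟩).symm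
    simpa using (Finset.mem_filter.1 hy).2
  · exact ((hrep (pt z)).2 z ⟨hz, (hpt z).1.1.symm⟩).symm

end Transversal

section Frob

open Equiv Function

variable {ι κ A B : Type*} [Ring A] [CommRing B]

lemma equivFin_val_injective [Fintype ι] [DecidableEq ι] :
    Function.Injective (fun x : ι => ((Fintype.equivFin ι) x : ℕ)) := by
  intro x y h
  exact (Fintype.equivFin ι).injective (Fin.val_injective h)

lemma frob_term_eq [Fintype ι] [DecidableEq ι] (f : A →ₗ[ℤ] B) (hf : Central f)
    (a : ι → A) (σ : Perm ι) (R : Finset ι) (hR : IsTransversal σ R) :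
    (∏ x : ι, if ∀ j : ℕ, (Fintype.equivFin ι) x ≤ (Fintype.equivFin ι) ((σ ^ j) x)
        then f (cycleProdAt a σ x) else 1)
      = ∏ y ∈ R, f (cycleProdAt a σ y) := by
  have h1 : ∀ x : ι, (∀ j : ℕ, (Fintype.equivFin ι) x ≤ (Fintype.equivFin ι) ((σ ^ j) x))
      ↔ (∀ j : ℕ, ((Fintype.equivFin ι) x : ℕ) ≤ ((Fintype.equivFin ι) ((σ ^ j) x) : ℕ)) := by
    intro x; exact forall_congr' fun j => Fin.le_def
  calc (∏ x : ι, if ∀ j : ℕ, (Fintype.equivFin ι) x ≤ (Fintype.equivFin ι) ((σ ^ j) x)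
        then f (cycleProdAt a σ x) else 1)
      = ∏ x : ι, if ∀ j : ℕ, ((Fintype.equivFin ι) x : ℕ) ≤ ((Fintype.equivFin ι) ((σ ^ j) x) : ℕ)
        then f (cycleProdAt a σ x) else 1 := by
        apply Finset.prod_congr rfl
        intro x _
        exact if_congr (h1 x) rfl rfl
    _ = ∏ y ∈ R, f (cycleProdAt a σ y) :=
        prod_transversal σ _ equivFin_val_injective _
          (fun x y h => f_cycleProdAt_sameCycle f hf a σ h) R hR

lemma sameCycle_comp_iff [Finite ι] [Finite κ] (σ : Perm ι) (τ : Perm κ) (u : κ → ι)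
    (hu : Function.Injective u) (hj : ∀ (j : ℕ) (z : κ), (σ ^ j) (u z) = u ((τ ^ j) z))
    (z w : κ) : σ.SameCycle (u z) (u w) ↔ τ.SameCycle z w := by
  constructor
  · intro h
    obtain ⟨k, -, -, hk⟩ := h.exists_pow_eq''
    rw [hj] at hk
    exact (sameCycle_pow τ z k).trans (by rw [hu hk])
  · intro h
    obtain ⟨k, -, -, hk⟩ := h.exists_pow_eq''
    exact (sameCycle_pow σ (u z) k).trans (by rw [hj, hk])

lemma isTransversal_image [Finite ι] [DecidableEq ι] (σ : Perm ι) (τ : Perm κ) (u : κ → ι)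
    (R : Finset κ) (hR : IsTransversal τ R) (hu : Function.Injective u)
    (hsur : ∀ x : ι, ∃ z : κ, σ.SameCycle x (u z))
    (hsc : ∀ z w : κ, σ.SameCycle (u z) (u w) ↔ τ.SameCycle z w) :
    IsTransversal σ (R.image u) := by
  intro x
  obtain ⟨z, hz⟩ := hsur x
  obtain ⟨y, ⟨hyR, hzy⟩, huniq⟩ := hR z
  refine ⟨u y, ⟨Finset.mem_image_of_mem u hyR, hz.trans ((hsc z y).2 hzy)⟩, ?_⟩
  rintro w ⟨hw, hxw⟩
  obtain ⟨y', hy', rfl⟩ := Finset.mem_image.1 hw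
  rw [huniq y' ⟨hy', (hsc z y').1 (hz.symm.trans hxw)⟩]

lemma frob_comp_equiv [Fintype ι] [Fintype κ] [DecidableEq ι] [DecidableEq κ]
    (f : A →ₗ[ℤ] B) (hf : Central f) (e : κ ≃ ι) (a : ι → A) :
    frob f a = frob f (a ∘ e) := by
  unfold frob
  refine (Fintype.sum_equiv e.permCongr _ _ ?_).symm
  intro τ
  have hsign : Equiv.Perm.sign (e.permCongr τ) = Equiv.Perm.sign τ :=
    Equiv.Perm.sign_permCongr e τ
  rw [hsign]
  congr 1
  have hj : ∀ (j : ℕ) (z : κ), ((e.permCongr τ) ^ j) (e z) = e ((τ ^ j) z) := by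
    intro j
    induction j with
    | zero => intro z; simp
    | succ j ih =>
      intro z
      rw [pow_succ', pow_succ', Equiv.Perm.mul_apply, Equiv.Perm.mul_apply, ih z]
      simp [Equiv.permCongr_apply]
  set R : Finset κ := Finset.univ.filter
    (fun y => ∀ j : ℕ, ((Fintype.equivFin κ) y : ℕ) ≤ ((Fintype.equivFin κ) ((τ ^ j) y) : ℕ))
    with hRdef
  have hR : IsTransversal τ R := isTransversal_min τ _ equivFin_val_injective
  have hR' : IsTransversal (e.permCongr τ) (R.image e) := by
    refine isTransversal_image _ τ e R hR e.injective (fun x => ⟨e.symm x, by rw [Equiv.apply_symm_apply]⟩) ?_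
    exact sameCycle_comp_iff _ τ e e.injective hj
  rw [frob_term_eq f hf a (e.permCongr τ) (R.image e) hR',
    frob_term_eq f hf (a ∘ e) τ R hR, Finset.prod_image (fun x _ y _ h => e.injective h)]
  apply Finset.prod_congr rfl
  intro y _
  congr 1
  exact (cycleProdAt_comp a (e.permCongr τ) τ e e.injective y (fun j => hj j y)).symm

end Frob

section OptionCase

open Equiv Function

variable {κ A B : Type*} [Fintype κ] [DecidableEq κ] [Ring A] [CommRing B]

lemma perm_pow_succ_apply {γ : Type*} (σ : Equiv.Perm γ) (n : ℕ) (y : γ) :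
    (σ ^ (n + 1)) y = σ ((σ ^ n) y) := by
  rw [pow_succ', Equiv.Perm.mul_apply]

lemma pow_ne_self_of_lt (τ : Equiv.Perm κ) (i : κ) (k : ℕ) (h0 : k ≠ 0)
    (hk : k < Function.minimalPeriod ⇑τ i) : (τ ^ k) i ≠ i := by
  intro h
  refine Function.not_isPeriodicPt_of_pos_of_lt_minimalPeriod h0 hk ?_
  show Function.IsFixedPt _ _
  simpa [Equiv.Perm.iterate_eq_pow, Function.IsFixedPt] using h

/-- The permutation of `Option κ` obtained from `τ` by inserting `none` into the cycle of `i`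
right after `i`. -/
def σB (τ : Equiv.Perm κ) (i : κ) : Equiv.Perm (Option κ) :=
  Equiv.swap none (some (τ i)) * τ.optionCongr

variable (τ : Equiv.Perm κ) (i : κ)

lemma σB_none : σB τ i none = some (τ i) := by
  simp [σB, Equiv.Perm.mul_apply]

lemma σB_some_i : σB τ i (some i) = none := by
  simp [σB, Equiv.Perm.mul_apply]

lemma σB_some {x : κ} (hx : x ≠ i) : σB τ i (some x) = some (τ x) := by
  simp only [σB, Equiv.Perm.mul_apply, Equiv.optionCongr_apply, Option.map_some]
  exact Equiv.swap_apply_of_ne_of_ne (by simp) (by simp [τ.injective.ne hx])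

lemma σB_pow_some {x : κ} (hx : ¬ τ.SameCycle x i) (j : ℕ) :
    ((σB τ i) ^ j) (some x) = some ((τ ^ j) x) := by
  induction j with
  | zero => simp
  | succ j ih =>
    have hne : (τ ^ j) x ≠ i := by
      intro h
      exact hx ⟨(j : ℤ), by rw [zpow_natCast, h]⟩
    rw [perm_pow_succ_apply, perm_pow_succ_apply, ih, σB_some τ i hne]

lemma σB_pow_cycle (k : ℕ) (hk1 : 1 ≤ k) (hk2 : k ≤ Function.minimalPeriod ⇑τ i) :
    ((σB τ i) ^ (k + 1)) (some i) = some ((τ ^ k) i) := by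
  induction k with
  | zero => omega
  | succ k ih =>
    rcases Nat.eq_zero_or_pos k with rfl | hk
    · rw [perm_pow_succ_apply, perm_pow_succ_apply, pow_zero, Equiv.Perm.one_apply,
        σB_some_i, σB_none, pow_one]
    · have hik : (τ ^ k) i ≠ i :=
        pow_ne_self_of_lt τ i k (by omega) (by omega)
      rw [perm_pow_succ_apply, ih hk (by omega), σB_some τ i hik, ← perm_pow_succ_apply]

lemma σB_minimalPeriod :
    Function.minimalPeriod ⇑(σB τ i) (some i) = Function.minimalPeriod ⇑τ i + 1 := by
  have hm1 : 1 ≤ Function.minimalPeriod ⇑τ i := perm_minimalPeriod_pos τ i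
  have hper : ((σB τ i) ^ (Function.minimalPeriod ⇑τ i + 1)) (some i) = some i := by
    rw [σB_pow_cycle τ i _ hm1 le_rfl, perm_pow_minimalPeriod_apply]
  apply le_antisymm
  · refine Function.IsPeriodicPt.minimalPeriod_le (by omega) ?_
    show Function.IsFixedPt _ _
    simpa only [Equiv.Perm.iterate_eq_pow, Function.IsFixedPt] using hper
  · by_contra hlt
    push_neg at hlt
    obtain ⟨t, ht⟩ : ∃ t, Function.minimalPeriod ⇑(σB τ i) (some i) = t := ⟨_, rfl⟩
    rw [ht] at hlt
    have htpos : 0 < t := ht ▸ perm_minimalPeriod_pos _ _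
    have hfix : ((σB τ i) ^ t) (some i) = some i := by
      rw [← ht]; exact perm_pow_minimalPeriod_apply _ _
    rcases Nat.eq_or_lt_of_le htpos with h1 | h2
    · rw [← h1, pow_one, σB_some_i] at hfix
      exact Option.some_ne_none _ hfix.symm
    · obtain ⟨k, rfl⟩ : ∃ k, t = k + 1 := ⟨t - 1, by omega⟩
      rw [σB_pow_cycle τ i k (by omega) (by omega)] at hfix
      have : (τ ^ k) i = i := Option.some_injective _ hfix
      exact pow_ne_self_of_lt τ i k (by omega) (by omega) this

lemma σB_sameCycle_some_of {z : κ} (hz : τ.SameCycle i z) :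
    (σB τ i).SameCycle (some i) (some z) := by
  obtain ⟨k, -, -, hk⟩ := hz.exists_pow_eq''
  set m := Function.minimalPeriod ⇑τ i with hm
  have hm1 : 1 ≤ m := perm_minimalPeriod_pos τ i
  have hmod : (τ ^ (k % m)) i = z := by
    rw [← hk]
    have := Function.iterate_mod_minimalPeriod_eq (f := ⇑τ) (x := i) (n := k)
    rw [← hm] at this
    simpa [Equiv.Perm.iterate_eq_pow] using this
  rcases Nat.eq_zero_or_pos (k % m) with h0 | hpos
  · rw [h0, pow_zero, Equiv.Perm.one_apply] at hmod
    rw [← hmod]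
  · have := σB_pow_cycle τ i (k % m) hpos (le_of_lt (Nat.mod_lt _ (by omega)))
    rw [hmod] at this
    exact (sameCycle_pow (σB τ i) (some i) (k % m + 1)).trans (by rw [this])

lemma σB_sameCycle_none : (σB τ i).SameCycle none (some i) := by
  have h : (σB τ i).SameCycle (some i) none := ⟨1, by simpa using σB_some_i τ i⟩
  exact h.symm

lemma σB_sameCycle_iff (x y : κ) :
    (σB τ i).SameCycle (some x) (some y) ↔ τ.SameCycle x y := by
  by_cases hx : τ.SameCycle x i
  · have hix : (σB τ i).SameCycle (some i) (some x) := σB_sameCycle_some_of τ i hx.symm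
    constructor
    · intro h
      have h1 : (σB τ i).SameCycle (some i) (some y) := hix.trans h
      obtain ⟨k, -, -, hk⟩ := h1.exists_pow_eq''
      set m := Function.minimalPeriod ⇑τ i with hm
      have hm1 : 1 ≤ m := perm_minimalPeriod_pos τ i
      have hMper : Function.minimalPeriod ⇑(σB τ i) (some i) = m + 1 := σB_minimalPeriod τ i
      have hmod : ((σB τ i) ^ (k % (m + 1))) (some i) = some y := by
        rw [← hk]
        have := Function.iterate_mod_minimalPeriod_eq (f := ⇑(σB τ i)) (x := some i) (n := k)
        rw [hMper] at this
        simpa [Equiv.Perm.iterate_eq_pow] using this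
      have hrlt : k % (m + 1) < m + 1 := Nat.mod_lt _ (by omega)
      rcases Nat.eq_zero_or_pos (k % (m + 1)) with h0 | hpos
      · rw [h0, pow_zero, Equiv.Perm.one_apply] at hmod
        have : y = i := (Option.some_injective _ hmod).symm
        rw [this]; exact hx
      · rcases Nat.eq_or_lt_of_le hpos with h1' | h2'
        · rw [← h1', pow_one, σB_some_i] at hmod
          exact absurd hmod.symm (Option.some_ne_none _)
        · obtain ⟨k', hk'⟩ : ∃ k', k % (m + 1) = k' + 1 := ⟨k % (m + 1) - 1, by omega⟩
          rw [hk', σB_pow_cycle τ i k' (by omega) (by omega)] at hmod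
          have : (τ ^ k') i = y := Option.some_injective _ hmod
          exact hx.trans ⟨(k' : ℤ), by rw [zpow_natCast, this]⟩
    · intro h
      have hy : τ.SameCycle i y := (hx.symm).trans h
      exact hix.symm.trans (σB_sameCycle_some_of τ i hy)
  · constructor
    · intro h
      obtain ⟨k, -, -, hk⟩ := h.exists_pow_eq''
      rw [σB_pow_some τ i hx] at hk
      exact ⟨(k : ℤ), by rw [zpow_natCast, Option.some_injective _ hk]⟩
    · intro h
      obtain ⟨k, -, -, hk⟩ := h.exists_pow_eq''
      exact ⟨(k : ℤ), by rw [zpow_natCast, σB_pow_some τ i hx, hk]⟩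

lemma cycleProdAt_σB (b : Option κ → A) :
    cycleProdAt b (σB τ i) (some i)
      = cycleProdAt (Function.update (b ∘ some) i (b (some i) * b none)) τ i := by
  have hm1 : 1 ≤ Function.minimalPeriod ⇑τ i := perm_minimalPeriod_pos τ i
  obtain ⟨m', hm'⟩ : ∃ m', Function.minimalPeriod ⇑τ i = m' + 1 :=
    ⟨Function.minimalPeriod ⇑τ i - 1, by omega⟩
  have hL : Function.minimalPeriod ⇑(σB τ i) (some i) = m' + 2 := by
    rw [σB_minimalPeriod, hm']
  unfold cycleProdAt
  rw [hL, hm']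
  have hLHS : List.map (fun j => b ((σB τ i ^ j) (some i))) (List.range (m' + 2))
      = b (some i) :: b none :: List.map (fun j => b (some ((τ ^ (j + 1)) i))) (List.range m') := by
    apply List.ext_getElem
    · simp
    intro u h1 h2
    rcases u with _ | u
    · rw [List.getElem_map, List.getElem_range, List.getElem_cons_zero, pow_zero,
        Equiv.Perm.one_apply]
    rcases u with _ | u
    · rw [List.getElem_map, List.getElem_range, List.getElem_cons_succ, List.getElem_cons_zero,
        pow_one, σB_some_i]
    · have hu : u < m' := by simpa using h1
      rw [List.getElem_map, List.getElem_range, List.getElem_cons_succ, List.getElem_cons_succ,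
        List.getElem_map, List.getElem_range, σB_pow_cycle τ i (u + 1) (by omega) (by omega)]
  have hRHS : List.map
        (fun j => Function.update (b ∘ some) i (b (some i) * b none) ((τ ^ j) i))
        (List.range (m' + 1))
      = (b (some i) * b none) :: List.map (fun j => b (some ((τ ^ (j + 1)) i)))
          (List.range m') := by
    apply List.ext_getElem
    · simp
    intro u h1 h2
    rcases u with _ | u
    · rw [List.getElem_map, List.getElem_range, List.getElem_cons_zero, pow_zero,
        Equiv.Perm.one_apply, Function.update_self]
    · have hu : u < m' := by simpa using h1
      have hne : (τ ^ (u + 1)) i ≠ i := pow_ne_self_of_lt τ i (u + 1) (by omega) (by omega)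
      rw [List.getElem_map, List.getElem_range, List.getElem_cons_succ, List.getElem_map,
        List.getElem_range, Function.update_of_ne hne]
      rfl
  rw [hLHS, hRHS, List.prod_cons, List.prod_cons, List.prod_cons, mul_assoc]

end OptionCase

section FrobOption

open Equiv Function

variable {κ A B : Type*} [Fintype κ] [DecidableEq κ] [Ring A] [CommRing B]

lemma optionCongr_pow_some (τ : Equiv.Perm κ) (j : ℕ) (z : κ) :
    (τ.optionCongr ^ j) (some z) = some ((τ ^ j) z) := by
  induction j generalizing z with
  | zero => simp
  | succ j ih =>
    rw [perm_pow_succ_apply, perm_pow_succ_apply, ih]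
    simp

lemma frob_option (f : A →ₗ[ℤ] B) (hf : Central f) (b : Option κ → A) :
    frob f b = frob f (b ∘ some) * f (b none)
      - ∑ i : κ, frob f (Function.update (b ∘ some) i (b (some i) * b none)) := by
  classical
  set G : Equiv.Perm (Option κ) → B := fun σ =>
    (Equiv.Perm.sign σ : ℤ) • ∏ x : Option κ,
      if ∀ j : ℕ, (Fintype.equivFin (Option κ)) x ≤ (Fintype.equivFin (Option κ)) ((σ ^ j) x)
      then f (cycleProdAt b σ x) else 1 with hG
  have some_inj : Function.Injective (some : κ → Option κ) := Option.some_injective κ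
  set R : Equiv.Perm κ → Finset κ := fun τ => Finset.univ.filter
    (fun y : κ => ∀ j : ℕ, ((Fintype.equivFin κ) y : ℕ) ≤ ((Fintype.equivFin κ) ((τ ^ j) y) : ℕ))
    with hRdef
  have hRt : ∀ τ : Equiv.Perm κ, IsTransversal τ (R τ) :=
    fun τ => isTransversal_min τ _ equivFin_val_injective
  -- Case A : the summand for (none, τ)
  have haveA : ∀ τ : Equiv.Perm κ, G (Equiv.Perm.decomposeOption.symm (none, τ))
      = (Equiv.Perm.sign τ : ℤ) • (f (b none) * ∏ x : κ,
          if ∀ j : ℕ, (Fintype.equivFin κ) x ≤ (Fintype.equivFin κ) ((τ ^ j) x)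
          then f (cycleProdAt (b ∘ some) τ x) else 1) := by
    intro τ
    have hσ : Equiv.Perm.decomposeOption.symm (none, τ) = τ.optionCongr := by
      ext x
      rw [Equiv.Perm.decomposeOption_symm_of_none_apply]
      simp
    rw [hG, hσ]
    beta_reduce
    rw [Equiv.optionCongr_sign]
    congr 1
    have hj : ∀ (j : ℕ) (z : κ), (τ.optionCongr ^ j) (some z) = some ((τ ^ j) z) :=
      fun j z => optionCongr_pow_some τ j z
    have hT : IsTransversal τ.optionCongr (insert none ((R τ).image some)) := by
      intro x
      match x with
      | none =>
        refine ⟨none, ⟨Finset.mem_insert_self _ _, Equiv.Perm.SameCycle.refl _ _⟩, ?_⟩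
        rintro w ⟨hw, hsc⟩
        obtain ⟨k, hk⟩ := hsc
        rw [Equiv.Perm.zpow_apply_eq_self_of_apply_eq_self (by simp) k] at hk
        exact hk.symm
      | some z =>
        obtain ⟨y, ⟨hyR, hzy⟩, huniq⟩ := hRt τ z
        refine ⟨some y, ⟨Finset.mem_insert_of_mem (Finset.mem_image_of_mem _ hyR),
          (sameCycle_comp_iff _ τ some some_inj hj z y).2 hzy⟩, ?_⟩
        rintro w ⟨hw, hsc⟩
        rcases Finset.mem_insert.1 hw with rfl | hw'
        · exfalso
          obtain ⟨k, hk⟩ := hsc.symm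
          rw [Equiv.Perm.zpow_apply_eq_self_of_apply_eq_self (by simp) k] at hk
          exact Option.some_ne_none _ hk.symm
        · obtain ⟨y', hy', rfl⟩ := Finset.mem_image.1 hw'
          rw [huniq y' ⟨hy', (sameCycle_comp_iff _ τ some some_inj hj z y').1 hsc⟩]
    rw [frob_term_eq f hf b τ.optionCongr _ hT]
    have hnonemem : (none : Option κ) ∉ (R τ).image some := by simp
    rw [Finset.prod_insert hnonemem]
    have hcycnone : cycleProdAt b τ.optionCongr none = b none := by
      have h1 : Function.minimalPeriod ⇑τ.optionCongr none = 1 :=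
        Function.minimalPeriod_eq_one_iff_isFixedPt.mpr (by simp [Function.IsFixedPt])
      unfold cycleProdAt
      rw [h1]
      simp [List.range_succ]
    rw [hcycnone, Finset.prod_image (fun x _ y _ h => some_inj h),
      frob_term_eq f hf (b ∘ some) τ (R τ) (hRt τ)]
    congr 1
    apply Finset.prod_congr rfl
    intro y _
    congr 1
    exact cycleProdAt_comp b τ.optionCongr τ some some_inj y (fun j => hj j y)
  -- Case B : the summand for (some (τ i), τ)
  have haveB : ∀ (τ : Equiv.Perm κ) (i : κ),
      G (Equiv.Perm.decomposeOption.symm (some (τ i), τ))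
      = - ((Equiv.Perm.sign τ : ℤ) • ∏ x : κ,
          if ∀ j : ℕ, (Fintype.equivFin κ) x ≤ (Fintype.equivFin κ) ((τ ^ j) x)
          then f (cycleProdAt
            (Function.update (b ∘ some) i (b (some i) * b none)) τ x) else 1) := by
    intro τ i
    have hσ : Equiv.Perm.decomposeOption.symm (some (τ i), τ) = σB τ i := rfl
    have hsign : Equiv.Perm.sign (σB τ i) = - Equiv.Perm.sign τ := by
      rw [σB, map_mul, Equiv.Perm.sign_swap (by simp), Equiv.optionCongr_sign, neg_one_mul]
    rw [hG, hσ]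
    beta_reduce
    rw [hsign]
    have hT : IsTransversal (σB τ i) ((R τ).image some) := by
      refine isTransversal_image _ τ some (R τ) (hRt τ) some_inj ?_ (σB_sameCycle_iff τ i)
      intro x
      match x with
      | none => exact ⟨i, σB_sameCycle_none τ i⟩
      | some z => exact ⟨z, Equiv.Perm.SameCycle.refl _ _⟩
    rw [frob_term_eq f hf b (σB τ i) _ hT,
      Finset.prod_image (fun x _ y _ h => some_inj h),
      frob_term_eq f hf (Function.update (b ∘ some) i (b (some i) * b none)) τ (R τ) (hRt τ)]
    have hprod : ∏ y ∈ R τ, f (cycleProdAt b (σB τ i) (some y))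
        = ∏ y ∈ R τ, f (cycleProdAt
            (Function.update (b ∘ some) i (b (some i) * b none)) τ y) := by
      apply Finset.prod_congr rfl
      intro y _
      by_cases hy : τ.SameCycle y i
      · have h1 : f (cycleProdAt b (σB τ i) (some y))
            = f (cycleProdAt b (σB τ i) (some i)) :=
          f_cycleProdAt_sameCycle f hf b _ ((σB_sameCycle_iff τ i y i).2 hy)
        have h2 : f (cycleProdAt
              (Function.update (b ∘ some) i (b (some i) * b none)) τ i)
            = f (cycleProdAt
              (Function.update (b ∘ some) i (b (some i) * b none)) τ y) :=
          f_cycleProdAt_sameCycle f hf _ τ hy.symm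
        rw [h1, cycleProdAt_σB, h2]
      · rw [cycleProdAt_comp b (σB τ i) τ some some_inj y (σB_pow_some τ i hy)]
        congr 1
        apply cycleProdAt_congr
        intro j
        have hne : (τ ^ j) y ≠ i := by
          intro h
          exact hy ⟨(j : ℤ), by rw [zpow_natCast, h]⟩
        rw [Function.update_of_ne hne]
        rfl
    rw [hprod]
    rw [Units.val_neg, neg_smul]
  -- Assemble
  have hstep1 : frob f b = ∑ p : Option κ × Equiv.Perm κ,
      G (Equiv.Perm.decomposeOption.symm p) :=
    (Fintype.sum_equiv Equiv.Perm.decomposeOption.symm _ G (fun p => rfl)).symm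
  rw [hstep1, Fintype.sum_prod_type, Fintype.sum_option]
  have hA : ∑ τ : Equiv.Perm κ, G (Equiv.Perm.decomposeOption.symm (none, τ))
      = frob f (b ∘ some) * f (b none) := by
    rw [show frob f (b ∘ some) = ∑ τ : Equiv.Perm κ, (Equiv.Perm.sign τ : ℤ) •
        ∏ x : κ, if ∀ j : ℕ, (Fintype.equivFin κ) x ≤ (Fintype.equivFin κ) ((τ ^ j) x)
          then f (cycleProdAt (b ∘ some) τ x) else 1 from rfl,
      Finset.sum_mul]
    apply Finset.sum_congr rfl
    intro τ _
    rw [haveA τ, smul_mul_assoc, mul_comm (f (b none))]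
  have hB : ∑ i' : κ, ∑ τ : Equiv.Perm κ, G (Equiv.Perm.decomposeOption.symm (some i', τ))
      = - ∑ i : κ, frob f (Function.update (b ∘ some) i (b (some i) * b none)) := by
    rw [Finset.sum_comm]
    have : ∀ τ : Equiv.Perm κ,
        ∑ i' : κ, G (Equiv.Perm.decomposeOption.symm (some i', τ))
        = ∑ i : κ, G (Equiv.Perm.decomposeOption.symm (some (τ i), τ)) :=
      fun τ => (Equiv.sum_comp (τ : κ ≃ κ)
        (fun i' => G (Equiv.Perm.decomposeOption.symm (some i', τ)))).symm
    rw [Finset.sum_congr rfl (fun τ _ => this τ)]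
    rw [Finset.sum_congr rfl (fun τ _ => Finset.sum_congr rfl (fun i _ => haveB τ i))]
    rw [Finset.sum_comm]
    simp only [Finset.sum_neg_distrib]
    rfl
  rw [hA, hB, sub_eq_add_neg]

end FrobOption

/-- `b_{P ∪ {n}} = b_P · g(aₙ) − ∑_{i ∈ P} b_P^{(i)}` (here with `n + 1` playing the role
of `n ≥ 1`, so that `P` is a subset of `Fin n`, i.e. of `[n−1]`). -/
theorem stmt11 {A B : Type*} [Ring A] [CommRing B] (g : A →ₗ[ℤ] B) (hg : Central g)
    (n : ℕ) (a : Fin (n + 1) → A) (P : Finset (Fin n)) :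
    frob g (fun x : {x // x ∈ insert (Fin.last n) (P.image Fin.castSucc)} => a x.1)
      = frob g (fun x : {x // x ∈ P} => a x.1.castSucc) * g (a (Fin.last n))
        - ∑ i ∈ P,
            frob g (fun x : {x // x ∈ P} =>
              Function.update (fun j : Fin n => a j.castSucc) i
                (a i.castSucc * a (Fin.last n)) x.1) := by
  classical
  set u : Option {x // x ∈ P} → {x // x ∈ insert (Fin.last n) (P.image Fin.castSucc)} :=
    fun o => o.elim ⟨Fin.last n, Finset.mem_insert_self _ _⟩
      (fun x => ⟨x.1.castSucc, Finset.mem_insert_of_mem (Finset.mem_image_of_mem _ x.2)⟩)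
    with hu
  have hbij : Function.Bijective u := by
    constructor
    · rintro (_ | x) (_ | y) h
      · rfl
      · exfalso
        have := congrArg Subtype.val h
        exact absurd this.symm (Fin.ne_of_lt (Fin.castSucc_lt_last y.1))
      · exfalso
        have := congrArg Subtype.val h
        exact absurd this (Fin.ne_of_lt (Fin.castSucc_lt_last x.1))
      · have := congrArg Subtype.val h
        have hxy : x.1 = y.1 := Fin.castSucc_injective n this
        rw [Subtype.ext hxy]
    · rintro ⟨y, hy⟩
      rcases Finset.mem_insert.1 hy with h | h
      · exact ⟨none, Subtype.ext h.symm⟩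
      · obtain ⟨z, hz, hz2⟩ := Finset.mem_image.1 h
        exact ⟨some ⟨z, hz⟩, Subtype.ext hz2⟩
  set e : Option {x // x ∈ P} ≃ {x // x ∈ insert (Fin.last n) (P.image Fin.castSucc)} :=
    Equiv.ofBijective u hbij with he
  rw [frob_comp_equiv g hg e]
  rw [frob_option g hg]
  have h1 : frob g (((fun x : {x // x ∈ insert (Fin.last n) (P.image Fin.castSucc)} => a x.1)
      ∘ ⇑e) ∘ some) = frob g (fun x : {x // x ∈ P} => a x.1.castSucc) := rfl
  have h2 : ((fun x : {x // x ∈ insert (Fin.last n) (P.image Fin.castSucc)} => a x.1) ∘ ⇑e)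
      none = a (Fin.last n) := rfl
  rw [h1, h2]
  congr 1
  have h3 : ∀ i : {x // x ∈ P},
      frob g (Function.update
        (((fun x : {x // x ∈ insert (Fin.last n) (P.image Fin.castSucc)} => a x.1) ∘ ⇑e) ∘ some) i
        ((((fun x : {x // x ∈ insert (Fin.last n) (P.image Fin.castSucc)} => a x.1) ∘ ⇑e)
          (some i)) * a (Fin.last n)))
      = frob g (fun x : {x // x ∈ P} =>
          Function.update (fun j : Fin n => a j.castSucc) i.1
            (a i.1.castSucc * a (Fin.last n)) x.1) := by
    intro i
    congr 1
    funext x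
    rw [Function.update_apply, Function.update_apply]
    exact if_congr Subtype.ext_iff rfl rfl
  rw [Finset.sum_congr rfl (fun i _ => h3 i)]
  exact Finset.sum_coe_sort P (fun iv => frob g (fun x : {x // x ∈ P} =>
    Function.update (fun j : Fin n => a j.castSucc) iv
      (a iv.castSucc * a (Fin.last n)) x.1))
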